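/- arXiv:2203.03052 — 2 statements merged into one kernel-verified Lean document; each statement's English description precedes it below -/
import Mathlib

section
/- Let m be a positive integer, τ ∈ ℍ, and z ∈ ℂ with 0 < Im z < Im τ; set α := Im(z)/Im(τ) and y := e^{2πiz}. Then Σ_{k∈ℤ} y^{2km+1} q^{mk² + k} / (1 − y q^k) = (1/2) Σ_{(k,l)∈ℤ²} ( sgn(k+α) + sgn(l) ) y^{2mk+l} q^{mk² + kl} − (1/2) Σ_{k∈ℤ} y^{2mk} q^{mk²}, where all series converge absolutely. -/
open Complex Real

noncomputable def qp (τ : ℂ) (c : ℝ) : ℂ := Complex.exp (2 * Real.pi * Complex.I * c * τ)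

lemma qp_add (τ : ℂ) (a b : ℝ) : qp τ (a + b) = qp τ a * qp τ b := by
  rw [qp, qp, qp, ← Complex.exp_add]; congr 1; push_cast; ring

lemma qp_ne_zero (τ : ℂ) (c : ℝ) : qp τ c ≠ 0 := Complex.exp_ne_zero _

lemma norm_qp (τ : ℂ) (c : ℝ) : ‖qp τ c‖ = Real.exp (-(2 * π * c * τ.im)) := by
  rw [qp, Complex.norm_exp]
  congr 1
  simp [Complex.mul_re, Complex.mul_im]

lemma qp_zpow (τ : ℂ) (c : ℝ) (n : ℤ) : qp τ (c * (n : ℝ)) = qp τ c ^ n := by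
  rw [qp, qp, ← Complex.exp_int_mul]; congr 1; push_cast; ring

lemma zpow_natAbs_nonneg {x : ℝ} (l : ℤ) (hl : 0 ≤ l) : x ^ l = x ^ l.natAbs := by
  rw [← zpow_natCast, Int.natAbs_of_nonneg hl]

lemma zpow_natAbs_nonpos {x : ℝ} (hx : x ≠ 0) (l : ℤ) (hl : l ≤ 0) :
    x ^ l = (x⁻¹) ^ l.natAbs := by
  rw [← zpow_natCast, inv_zpow, ← zpow_neg]
  congr 1
  omega

lemma summable_geom_natAbs {ρ : ℝ} (h0 : 0 ≤ ρ) (h1 : ρ < 1) :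
    Summable fun l : ℤ => ρ ^ l.natAbs := by
  apply Summable.of_nat_of_neg <;>
    simpa using summable_geometric_of_lt_one h0 h1

lemma summable_exp_quad (T S : ℝ) (hT : 0 < T) :
    Summable fun n : ℤ => Real.exp (-π * (T * (n : ℝ) ^ 2 + 2 * S * (n : ℝ))) := by
  refine Summable.of_nonneg_of_le (fun n => (Real.exp_pos _).le) (fun n => ?_)
    (by simpa using summable_pow_mul_jacobiTheta₂_term_bound |S| hT 0)
  rw [Real.exp_le_exp]
  have h1 : -(|S| * |(n : ℝ)|) ≤ S * (n : ℝ) := by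
    rw [← abs_mul]; exact neg_abs_le _
  have h2 : ((|n| : ℤ) : ℝ) = |(n : ℝ)| := by push_cast; ring
  nlinarith [Real.pi_pos]

lemma norm_y_zpow (z y : ℂ) (hy : y = Complex.exp (2 * Real.pi * Complex.I * z)) (n : ℤ) :
    ‖y ^ n‖ = Real.exp (-(2 * π * z.im) * (n : ℝ)) := by
  rw [hy, ← Complex.exp_int_mul, Complex.norm_exp]
  congr 1
  simp [Complex.mul_re, Complex.mul_im]
  ring


lemma hasSum_inner_pos (A w : ℂ) (hw : ‖w‖ < 1) :
    HasSum (fun l : ℤ => ((1 + Real.sign ((l : ℝ)) : ℝ) : ℂ) * (A * w ^ l))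
      (2 * (A / (1 - w)) - A) := by
  have h1 : HasSum (fun n : ℕ => ((1 + Real.sign (((n : ℤ) : ℝ)) : ℝ) : ℂ) * (A * w ^ ((n : ℤ))))
      (2 * A * (1 - w)⁻¹ - A) := by
    have hg := (hasSum_geometric_of_norm_lt_one hw).mul_left (2 * A)
    have hone : HasSum (fun n : ℕ => if n = 0 then A else 0) A := hasSum_ite_eq 0 A
    have hfun : (fun n : ℕ => ((1 + Real.sign (((n : ℤ) : ℝ)) : ℝ) : ℂ) * (A * w ^ ((n : ℤ))))
        = fun n : ℕ => 2 * A * w ^ n - (if n = 0 then A else 0) := by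
      funext n
      rcases Nat.eq_zero_or_pos n with rfl | hn
      · have hc : (((0 : ℕ) : ℤ) : ℝ) = 0 := by norm_num
        rw [hc, Real.sign_zero, add_zero, if_pos rfl]
        push_cast
        rw [zpow_zero, pow_zero]
        ring
      · have hs : Real.sign (((n : ℤ) : ℝ)) = 1 := Real.sign_of_pos (by exact_mod_cast hn)
        rw [hs, if_neg (Nat.pos_iff_ne_zero.mp hn), sub_zero, zpow_natCast]
        push_cast
        ring
    rw [hfun]
    simpa using hg.sub hone
  have h2 : HasSum (fun n : ℕ =>
      ((1 + Real.sign ((Int.cast (-((n : ℤ) + 1)) : ℝ)) : ℝ) : ℂ) * (A * w ^ (-((n : ℤ) + 1)))) 0 := by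
    have hfun : (fun n : ℕ =>
        ((1 + Real.sign ((Int.cast (-((n : ℤ) + 1)) : ℝ)) : ℝ) : ℂ) * (A * w ^ (-((n : ℤ) + 1))))
        = fun _ : ℕ => (0 : ℂ) := by
      funext n
      have hs : Real.sign ((Int.cast (-((n : ℤ) + 1)) : ℝ)) = -1 := by
        refine Real.sign_of_neg ?_
        push_cast
        linarith [Nat.cast_nonneg (α := ℝ) n]
      rw [hs]
      norm_num
    rw [hfun]
    exact hasSum_zero
  have h := HasSum.of_nat_of_neg_add_one
    (f := fun l : ℤ => ((1 + Real.sign ((l : ℝ)) : ℝ) : ℂ) * (A * w ^ l)) h1 h2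
  convert h using 1
  rw [add_zero, div_eq_mul_inv]
  ring

lemma hasSum_inner_neg (A w : ℂ) (hw0 : w ≠ 0) (hw : 1 < ‖w‖) :
    HasSum (fun l : ℤ => ((-1 + Real.sign ((l : ℝ)) : ℝ) : ℂ) * (A * w ^ l))
      (2 * (A / (1 - w)) - A) := by
  have hW1 : w ≠ 1 := by
    intro h
    rw [h, norm_one] at hw
    exact lt_irrefl _ hw
  have h1w : (1 : ℂ) - w ≠ 0 := sub_ne_zero.mpr fun h => hW1 h.symm
  have hv : ‖w⁻¹‖ < 1 := by
    rw [norm_inv]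
    exact inv_lt_one_of_one_lt₀ hw
  have h1 : HasSum (fun n : ℕ => ((-1 + Real.sign (((n : ℤ) : ℝ)) : ℝ) : ℂ) * (A * w ^ ((n : ℤ))))
      (-A) := by
    have hfun : (fun n : ℕ => ((-1 + Real.sign (((n : ℤ) : ℝ)) : ℝ) : ℂ) * (A * w ^ ((n : ℤ))))
        = fun n : ℕ => if n = 0 then -A else 0 := by
      funext n
      rcases Nat.eq_zero_or_pos n with rfl | hn
      · have hc : (((0 : ℕ) : ℤ) : ℝ) = 0 := by norm_num
        rw [hc, Real.sign_zero, add_zero, if_pos rfl]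
        push_cast
        rw [zpow_zero]
        ring
      · have hs : Real.sign (((n : ℤ) : ℝ)) = 1 := Real.sign_of_pos (by exact_mod_cast hn)
        rw [hs, if_neg (Nat.pos_iff_ne_zero.mp hn)]
        norm_num
    rw [hfun]
    exact hasSum_ite_eq 0 (-A)
  have h2 : HasSum (fun n : ℕ =>
      ((-1 + Real.sign ((Int.cast (-((n : ℤ) + 1)) : ℝ)) : ℝ) : ℂ) * (A * w ^ (-((n : ℤ) + 1))))
      (2 * (A / (1 - w))) := by
    have hg := (hasSum_geometric_of_norm_lt_one hv).mul_left (-2 * A * w⁻¹)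
    have hfun : (fun n : ℕ =>
        ((-1 + Real.sign ((Int.cast (-((n : ℤ) + 1)) : ℝ)) : ℝ) : ℂ) * (A * w ^ (-((n : ℤ) + 1))))
        = fun n : ℕ => (-2 * A * w⁻¹) * (w⁻¹) ^ n := by
      funext n
      have hs : Real.sign ((Int.cast (-((n : ℤ) + 1)) : ℝ)) = -1 := by
        refine Real.sign_of_neg ?_
        push_cast
        linarith [Nat.cast_nonneg (α := ℝ) n]
      have hzp : w ^ (-((n : ℤ) + 1)) = w⁻¹ ^ n * w⁻¹ := by
        rw [zpow_neg, zpow_add_one₀ hw0, mul_inv, ← inv_zpow, zpow_natCast]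
      rw [hs, hzp]
      push_cast
      ring
    rw [hfun]
    have e1 : (1 : ℂ) - w⁻¹ = (w - 1) * w⁻¹ := by
      rw [sub_mul, mul_inv_cancel₀ hw0, one_mul]
    have e2 : ((1 : ℂ) - w⁻¹)⁻¹ = w * (w - 1)⁻¹ := by
      rw [e1, mul_inv, inv_inv, mul_comm]
    have e3 : (w - 1)⁻¹ = -((1 : ℂ) - w)⁻¹ := by
      rw [← neg_sub, inv_neg]
    have hval : (-2 * A * w⁻¹) * ((1 : ℂ) - w⁻¹)⁻¹ = 2 * (A / (1 - w)) := by
      calc (-2 * A * w⁻¹) * ((1 : ℂ) - w⁻¹)⁻¹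
          = -2 * A * (w - 1)⁻¹ * (w⁻¹ * w) := by rw [e2]; ring
        _ = -2 * A * (w - 1)⁻¹ := by rw [inv_mul_cancel₀ hw0, mul_one]
        _ = 2 * (A / (1 - w)) := by rw [e3, div_eq_mul_inv]; ring
    exact hval ▸ hg
  have h := HasSum.of_nat_of_neg_add_one
    (f := fun l : ℤ => ((-1 + Real.sign ((l : ℝ)) : ℝ) : ℂ) * (A * w ^ l)) h1 h2
  convert h using 1
  ring

/-- For `0 < Im z < Im τ` and `α = Im z / Im τ`,
`Σ_{k∈ℤ} y^{2km+1} q^{mk²+k}/(1 - y q^k)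
  = (1/2) Σ_{(k,l)∈ℤ²} (sgn(k+α)+sgn(l)) y^{2mk+l} q^{mk²+kl} - (1/2) Σ_{k∈ℤ} y^{2mk} q^{mk²}`. -/
theorem f2_signed_expansion (m : ℕ) (hm : 0 < m) (τ z : ℂ) (hτ : 0 < τ.im)
    (hz0 : 0 < z.im) (hz1 : z.im < τ.im)
    (y : ℂ) (hy : y = Complex.exp (2 * Real.pi * Complex.I * z)) :
    Summable (fun k : ℤ =>
      ‖y ^ (2 * k * (m : ℤ) + 1) * qp τ ((m : ℝ) * (k : ℝ) ^ 2 + (k : ℝ)) / (1 - y * qp τ (k : ℝ))‖) ∧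
    Summable (fun n : ℤ × ℤ =>
      ‖((Real.sign ((n.1 : ℝ) + z.im / τ.im) + Real.sign (n.2 : ℝ) : ℝ) : ℂ) *
        (y ^ (2 * (m : ℤ) * n.1 + n.2) *
          qp τ ((m : ℝ) * (n.1 : ℝ) ^ 2 + (n.1 : ℝ) * (n.2 : ℝ)))‖) ∧
    Summable (fun k : ℤ => ‖y ^ (2 * (m : ℤ) * k) * qp τ ((m : ℝ) * (k : ℝ) ^ 2)‖) ∧
    (∑' k : ℤ, y ^ (2 * k * (m : ℤ) + 1) * qp τ ((m : ℝ) * (k : ℝ) ^ 2 + (k : ℝ)) / (1 - y * qp τ (k : ℝ))) =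
      (1 / 2) * (∑' n : ℤ × ℤ,
        ((Real.sign ((n.1 : ℝ) + z.im / τ.im) + Real.sign (n.2 : ℝ) : ℝ) : ℂ) *
          (y ^ (2 * (m : ℤ) * n.1 + n.2) *
            qp τ ((m : ℝ) * (n.1 : ℝ) ^ 2 + (n.1 : ℝ) * (n.2 : ℝ)))) -
      (1 / 2) * (∑' k : ℤ, y ^ (2 * (m : ℤ) * k) * qp τ ((m : ℝ) * (k : ℝ) ^ 2)) := by
  set α := z.im / τ.im with hα
  have hα0 : 0 < α := div_pos hz0 hτ
  have hα1 : α < 1 := (div_lt_one hτ).2 hz1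
  have hzim : z.im = α * τ.im := (div_mul_cancel₀ _ hτ.ne').symm
  have hy0 : y ≠ 0 := by rw [hy]; exact Complex.exp_ne_zero _
  have hny : ‖y‖ = Real.exp (-(2 * π * z.im)) := by
    have := norm_y_zpow z y hy 1
    simpa using this
  -- norm of w k = y * qp τ k
  have hnw : ∀ k : ℤ, ‖y * qp τ (k : ℝ)‖ = Real.exp (-(2 * π * τ.im * ((k : ℝ) + α))) := by
    intro k
    rw [norm_mul, hny, norm_qp, ← Real.exp_add]
    congr 1
    rw [hzim]; ring
  have hw0 : ∀ k : ℤ, y * qp τ (k : ℝ) ≠ 0 := fun k => mul_ne_zero hy0 (qp_ne_zero τ _)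
  set ρ₀ : ℝ := Real.exp (-(2 * π * τ.im * α)) with hρ₀
  set ρ₁ : ℝ := Real.exp (-(2 * π * τ.im * (1 - α))) with hρ₁
  set ρ : ℝ := max ρ₀ ρ₁ with hρ
  have hρ₀1 : ρ₀ < 1 := Real.exp_lt_one_iff.2 (by nlinarith [Real.pi_pos])
  have hρ₁1 : ρ₁ < 1 := Real.exp_lt_one_iff.2 (by nlinarith [Real.pi_pos])
  have hρ1 : ρ < 1 := max_lt hρ₀1 hρ₁1
  have hρnn : 0 ≤ ρ := le_trans (Real.exp_pos _).le (le_max_left _ _)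
  have hwle : ∀ k : ℤ, 0 ≤ k → ‖y * qp τ (k : ℝ)‖ ≤ ρ₀ := by
    intro k hk
    rw [hnw, hρ₀, Real.exp_le_exp]
    have h1 : (0 : ℝ) ≤ (k : ℝ) := by exact_mod_cast hk
    have hpt : (0:ℝ) < 2 * π * τ.im := by positivity
    nlinarith [mul_nonneg hpt.le h1]
  have hwge : ∀ k : ℤ, k < 0 → ‖y * qp τ (k : ℝ)‖⁻¹ ≤ ρ₁ := by
    intro k hk
    rw [hnw, ← Real.exp_neg, hρ₁, Real.exp_le_exp]
    have h1 : (k : ℝ) ≤ -1 := by exact_mod_cast (by omega : k ≤ -1)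
    have hpt : (0:ℝ) < 2 * π * τ.im := by positivity
    nlinarith [mul_nonneg hpt.le (by linarith : (0:ℝ) ≤ -((k:ℝ)+1))]
  have hρ₁0 : 0 < ρ₁ := Real.exp_pos _
  have hwgt : ∀ k : ℤ, k < 0 → ρ₁⁻¹ ≤ ‖y * qp τ (k : ℝ)‖ := by
    intro k hk
    have h1 : 0 < ‖y * qp τ (k : ℝ)‖ := norm_pos_iff.2 (hw0 k)
    have := (inv_le_inv₀ hρ₁0 (inv_pos.2 h1)).2 (hwge k hk)
    simpa using this
  set δ : ℝ := min (1 - ρ₀) (ρ₁⁻¹ - 1) with hδ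
  have hδ0 : 0 < δ := by
    apply lt_min (by linarith)
    have := (one_lt_inv₀ hρ₁0).2 hρ₁1
    linarith
  have hδle : ∀ k : ℤ, δ ≤ ‖1 - y * qp τ (k : ℝ)‖ := by
    intro k
    rcases le_or_gt 0 k with hk | hk
    · calc δ ≤ 1 - ρ₀ := min_le_left _ _
        _ ≤ 1 - ‖y * qp τ (k : ℝ)‖ := by linarith [hwle k hk]
        _ ≤ ‖1 - y * qp τ (k : ℝ)‖ := by
            have := norm_sub_norm_le (1 : ℂ) (y * qp τ (k : ℝ))
            simpa using this
    · calc δ ≤ ρ₁⁻¹ - 1 := min_le_right _ _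
        _ ≤ ‖y * qp τ (k : ℝ)‖ - 1 := by linarith [hwgt k hk]
        _ ≤ ‖y * qp τ (k : ℝ) - 1‖ := by
            have := norm_sub_norm_le (y * qp τ (k : ℝ)) (1 : ℂ)
            simpa using this
        _ = ‖1 - y * qp τ (k : ℝ)‖ := norm_sub_rev _ _
  have h1w : ∀ k : ℤ, (1 : ℂ) - y * qp τ (k : ℝ) ≠ 0 := by
    intro k h
    have := hδle k
    rw [h, norm_zero] at this
    linarith
  -- sign facts
  have hsgnp : ∀ k : ℤ, 0 ≤ k → Real.sign ((k : ℝ) + α) = 1 := by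
    intro k hk
    exact Real.sign_of_pos (by
      have : (0 : ℝ) ≤ (k : ℝ) := by exact_mod_cast hk
      linarith)
  have hsgnn : ∀ k : ℤ, k < 0 → Real.sign ((k : ℝ) + α) = -1 := by
    intro k hk
    refine Real.sign_of_neg ?_
    have : (k : ℝ) ≤ -1 := by exact_mod_cast (by omega : k ≤ -1)
    linarith
  -- norm of A k
  have hnA : ∀ k : ℤ, ‖y ^ (2 * (m : ℤ) * k) * qp τ ((m : ℝ) * (k : ℝ) ^ 2)‖
      = Real.exp (-π * ((2 * m * τ.im) * (k : ℝ) ^ 2 + 2 * (2 * m * z.im) * (k : ℝ))) := by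
    intro k
    rw [norm_mul, norm_y_zpow z y hy, norm_qp, ← Real.exp_add]
    congr 1
    push_cast
    ring
  have key3 : Summable (fun k : ℤ => ‖y ^ (2 * (m : ℤ) * k) * qp τ ((m : ℝ) * (k : ℝ) ^ 2)‖) := by
    simp only [hnA]
    exact summable_exp_quad _ _ (by positivity)
  -- product form of the double-sum summand
  have hFeq : ∀ k l : ℤ, y ^ (2 * (m : ℤ) * k + l) * qp τ ((m : ℝ) * (k : ℝ) ^ 2 + (k : ℝ) * (l : ℝ))
      = (y ^ (2 * (m : ℤ) * k) * qp τ ((m : ℝ) * (k : ℝ) ^ 2)) * (y * qp τ (k : ℝ)) ^ l := by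
    intro k l
    rw [zpow_add₀ hy0, qp_add, qp_zpow, mul_zpow]
    ring
  -- pointwise bound
  have hFb : ∀ k l : ℤ,
      ‖((Real.sign ((k : ℝ) + α) + Real.sign ((l : ℝ)) : ℝ) : ℂ) *
        (y ^ (2 * (m : ℤ) * k + l) * qp τ ((m : ℝ) * (k : ℝ) ^ 2 + (k : ℝ) * (l : ℝ)))‖
      ≤ 2 * (‖y ^ (2 * (m : ℤ) * k) * qp τ ((m : ℝ) * (k : ℝ) ^ 2)‖ * ρ ^ l.natAbs) := by
    intro k l
    rw [hFeq k l, norm_mul, Complex.norm_real, norm_mul, norm_zpow]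
    have hAnn : (0:ℝ) ≤ ‖y ^ (2 * (m : ℤ) * k) * qp τ ((m : ℝ) * (k : ℝ) ^ 2)‖ := norm_nonneg _
    rcases le_or_gt 0 k with hk | hk
    · rcases lt_trichotomy l 0 with hl | hl | hl
      · rw [hsgnp k hk, Real.sign_of_neg (show (l:ℝ) < 0 by exact_mod_cast hl),
          show (1:ℝ) + -1 = 0 by norm_num, norm_zero, zero_mul]
        positivity
      · subst hl
        simp only [Int.cast_zero, Real.sign_zero, add_zero, zpow_zero, mul_one,
          Int.natAbs_zero, pow_zero, norm_one]
        rw [hsgnp k hk, show ((1:ℝ)) = 1 from rfl]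
        simp only [norm_one]
        linarith
      · rw [hsgnp k hk, Real.sign_of_pos (show (0:ℝ) < (l:ℝ) by exact_mod_cast hl)]
        have hwρ : ‖y * qp τ (k : ℝ)‖ ≤ ρ := (hwle k hk).trans (le_max_left _ _)
        have hpow : ‖y * qp τ (k : ℝ)‖ ^ l ≤ ρ ^ l.natAbs := by
          rw [zpow_natAbs_nonneg l hl.le]
          exact pow_le_pow_left₀ (norm_nonneg _) hwρ _
        have h3 := mul_le_mul_of_nonneg_left hpow hAnn
        have h4 : ‖(1 + 1 : ℝ)‖ = 2 := by rw [Real.norm_eq_abs]; norm_num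
        rw [h4]
        linarith
    · rcases lt_trichotomy l 0 with hl | hl | hl
      · rw [hsgnn k hk, Real.sign_of_neg (show (l:ℝ) < 0 by exact_mod_cast hl)]
        have hwρ : ‖y * qp τ (k : ℝ)‖⁻¹ ≤ ρ := (hwge k hk).trans (le_max_right _ _)
        have hpow : ‖y * qp τ (k : ℝ)‖ ^ l ≤ ρ ^ l.natAbs := by
          rw [zpow_natAbs_nonpos (norm_ne_zero_iff.2 (hw0 k)) l hl.le]
          exact pow_le_pow_left₀ (by positivity) hwρ _
        have h3 := mul_le_mul_of_nonneg_left hpow hAnn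
        have h4 : ‖(-1 + -1 : ℝ)‖ = 2 := by rw [Real.norm_eq_abs]; norm_num
        rw [h4]
        linarith
      · subst hl
        simp only [Int.cast_zero, Real.sign_zero, add_zero, zpow_zero, mul_one,
          Int.natAbs_zero, pow_zero]
        rw [hsgnn k hk]
        have h4 : ‖(-1 : ℝ)‖ = 1 := by rw [Real.norm_eq_abs]; norm_num
        rw [h4]
        linarith
      · rw [hsgnn k hk, Real.sign_of_pos (show (0:ℝ) < (l:ℝ) by exact_mod_cast hl),
          show (-1:ℝ) + 1 = 0 by norm_num, norm_zero, zero_mul]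
        positivity
  have hgeo : Summable (fun l : ℤ => ρ ^ l.natAbs) := summable_geom_natAbs hρnn hρ1
  have hinnerS : ∀ k : ℤ, Summable (fun l : ℤ =>
      ‖((Real.sign ((k : ℝ) + α) + Real.sign ((l : ℝ)) : ℝ) : ℂ) *
        (y ^ (2 * (m : ℤ) * k + l) * qp τ ((m : ℝ) * (k : ℝ) ^ 2 + (k : ℝ) * (l : ℝ)))‖) := by
    intro k
    refine Summable.of_nonneg_of_le (fun l => norm_nonneg _) (fun l => hFb k l) ?_
    simpa only [mul_assoc] using
      hgeo.mul_left (2 * ‖y ^ (2 * (m : ℤ) * k) * qp τ ((m : ℝ) * (k : ℝ) ^ 2)‖)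
  have houter : Summable (fun k : ℤ => ∑' l : ℤ,
      ‖((Real.sign ((k : ℝ) + α) + Real.sign ((l : ℝ)) : ℝ) : ℂ) *
        (y ^ (2 * (m : ℤ) * k + l) * qp τ ((m : ℝ) * (k : ℝ) ^ 2 + (k : ℝ) * (l : ℝ)))‖) := by
    set C : ℝ := ∑' l : ℤ, ρ ^ l.natAbs with hC
    refine Summable.of_nonneg_of_le (fun k => tsum_nonneg fun l => norm_nonneg _)
      (fun k => ?_) ((key3.mul_left 2).mul_right C)
    calc ∑' l : ℤ, ‖((Real.sign ((k : ℝ) + α) + Real.sign ((l : ℝ)) : ℝ) : ℂ) *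
          (y ^ (2 * (m : ℤ) * k + l) * qp τ ((m : ℝ) * (k : ℝ) ^ 2 + (k : ℝ) * (l : ℝ)))‖
        ≤ ∑' l : ℤ, (2 * ‖y ^ (2 * (m : ℤ) * k) * qp τ ((m : ℝ) * (k : ℝ) ^ 2)‖) * ρ ^ l.natAbs := by
          refine Summable.tsum_le_tsum (fun l => ?_) (hinnerS k) (hgeo.mul_left _)
          simpa only [mul_assoc] using hFb k l
      _ = (2 * ‖y ^ (2 * (m : ℤ) * k) * qp τ ((m : ℝ) * (k : ℝ) ^ 2)‖) * C := tsum_mul_left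
  have key2 : Summable (fun n : ℤ × ℤ =>
      ‖((Real.sign ((n.1 : ℝ) + α) + Real.sign ((n.2 : ℝ)) : ℝ) : ℂ) *
        (y ^ (2 * (m : ℤ) * n.1 + n.2) *
          qp τ ((m : ℝ) * (n.1 : ℝ) ^ 2 + (n.1 : ℝ) * (n.2 : ℝ)))‖) :=
    (summable_prod_of_nonneg (fun _ => norm_nonneg _)).2 ⟨hinnerS, houter⟩
  -- LHS term rewriting
  have hterm : ∀ k : ℤ, y ^ (2 * k * (m : ℤ) + 1) * qp τ ((m : ℝ) * (k : ℝ) ^ 2 + (k : ℝ)) / (1 - y * qp τ (k : ℝ))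
      = y ^ (2 * (m : ℤ) * k) * qp τ ((m : ℝ) * (k : ℝ) ^ 2) * (y * qp τ (k : ℝ)) / (1 - y * qp τ (k : ℝ)) := by
    intro k
    rw [show 2 * k * (m : ℤ) + 1 = 2 * (m : ℤ) * k + 1 by ring, zpow_add_one₀ hy0, qp_add]
    ring
  have hAw : Summable (fun k : ℤ => ‖y ^ (2 * (m : ℤ) * k) * qp τ ((m : ℝ) * (k : ℝ) ^ 2)‖ * ‖y * qp τ (k : ℝ)‖) := by
    have heq : ∀ k : ℤ, ‖y ^ (2 * (m : ℤ) * k) * qp τ ((m : ℝ) * (k : ℝ) ^ 2)‖ * ‖y * qp τ (k : ℝ)‖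
        = Real.exp (-(2 * π * τ.im * α)) *
          Real.exp (-π * ((2 * m * τ.im) * (k : ℝ) ^ 2 + 2 * (2 * m * z.im + τ.im) * (k : ℝ))) := by
      intro k
      rw [hnA, hnw, ← Real.exp_add, ← Real.exp_add]
      congr 1
      ring
    simp only [heq]
    exact (summable_exp_quad _ _ (by positivity)).mul_left _
  have key1' : Summable (fun k : ℤ =>
      ‖y ^ (2 * (m : ℤ) * k) * qp τ ((m : ℝ) * (k : ℝ) ^ 2) * (y * qp τ (k : ℝ)) / (1 - y * qp τ (k : ℝ))‖) := by
    refine Summable.of_nonneg_of_le (fun k => norm_nonneg _) (fun k => ?_) (hAw.mul_left δ⁻¹)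
    rw [norm_div, norm_mul]
    have hb0 : 0 < ‖1 - y * qp τ (k : ℝ)‖ := lt_of_lt_of_le hδ0 (hδle k)
    rw [div_le_iff₀ hb0]
    have e : δ⁻¹ * (‖y ^ (2 * (m : ℤ) * k) * qp τ ((m : ℝ) * (k : ℝ) ^ 2)‖ * ‖y * qp τ (k : ℝ)‖) *
        ‖1 - y * qp τ (k : ℝ)‖
        = (‖y ^ (2 * (m : ℤ) * k) * qp τ ((m : ℝ) * (k : ℝ) ^ 2)‖ * ‖y * qp τ (k : ℝ)‖) *
          (δ⁻¹ * ‖1 - y * qp τ (k : ℝ)‖) := by ring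
    rw [e]
    have h1 : 1 ≤ δ⁻¹ * ‖1 - y * qp τ (k : ℝ)‖ := by
      calc (1 : ℝ) = δ⁻¹ * δ := (inv_mul_cancel₀ hδ0.ne').symm
        _ ≤ δ⁻¹ * ‖1 - y * qp τ (k : ℝ)‖ :=
            mul_le_mul_of_nonneg_left (hδle k) (inv_nonneg.2 hδ0.le)
    nlinarith [mul_nonneg (norm_nonneg (y ^ (2 * (m : ℤ) * k) * qp τ ((m : ℝ) * (k : ℝ) ^ 2)))
      (norm_nonneg (y * qp τ (k : ℝ)))]
  have key1 : Summable (fun k : ℤ =>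
      ‖y ^ (2 * k * (m : ℤ) + 1) * qp τ ((m : ℝ) * (k : ℝ) ^ 2 + (k : ℝ)) / (1 - y * qp τ (k : ℝ))‖) := by
    simp only [hterm]
    exact key1'
  have hinner : ∀ k : ℤ, HasSum (fun l : ℤ =>
      ((Real.sign ((k : ℝ) + α) + Real.sign ((l : ℝ)) : ℝ) : ℂ) *
        (y ^ (2 * (m : ℤ) * k + l) * qp τ ((m : ℝ) * (k : ℝ) ^ 2 + (k : ℝ) * (l : ℝ))))
      (2 * (y ^ (2 * (m : ℤ) * k) * qp τ ((m : ℝ) * (k : ℝ) ^ 2) / (1 - y * qp τ (k : ℝ)))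
        - y ^ (2 * (m : ℤ) * k) * qp τ ((m : ℝ) * (k : ℝ) ^ 2)) := by
    intro k
    rcases le_or_gt 0 k with hk | hk
    · have hfun : (fun l : ℤ =>
          ((Real.sign ((k : ℝ) + α) + Real.sign ((l : ℝ)) : ℝ) : ℂ) *
            (y ^ (2 * (m : ℤ) * k + l) * qp τ ((m : ℝ) * (k : ℝ) ^ 2 + (k : ℝ) * (l : ℝ))))
          = fun l : ℤ => ((1 + Real.sign ((l : ℝ)) : ℝ) : ℂ) *
            (y ^ (2 * (m : ℤ) * k) * qp τ ((m : ℝ) * (k : ℝ) ^ 2) * (y * qp τ (k : ℝ)) ^ l) := by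
        funext l
        rw [hFeq k l, hsgnp k hk]
      rw [hfun]
      exact hasSum_inner_pos _ _ ((hwle k hk).trans_lt hρ₀1)
    · have hfun : (fun l : ℤ =>
          ((Real.sign ((k : ℝ) + α) + Real.sign ((l : ℝ)) : ℝ) : ℂ) *
            (y ^ (2 * (m : ℤ) * k + l) * qp τ ((m : ℝ) * (k : ℝ) ^ 2 + (k : ℝ) * (l : ℝ))))
          = fun l : ℤ => ((-1 + Real.sign ((l : ℝ)) : ℝ) : ℂ) *
            (y ^ (2 * (m : ℤ) * k) * qp τ ((m : ℝ) * (k : ℝ) ^ 2) * (y * qp τ (k : ℝ)) ^ l) := by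
        funext l
        rw [hFeq k l, hsgnn k hk]
      rw [hfun]
      refine hasSum_inner_neg _ _ (hw0 k) ?_
      calc (1 : ℝ) < ρ₁⁻¹ := (one_lt_inv₀ hρ₁0).2 hρ₁1
        _ ≤ ‖y * qp τ (k : ℝ)‖ := hwgt k hk
  refine ⟨key1, key2, key3, ?_⟩
  simp only [hterm]
  have hFsum : Summable (fun n : ℤ × ℤ =>
      ((Real.sign ((n.1 : ℝ) + α) + Real.sign ((n.2 : ℝ)) : ℝ) : ℂ) *
        (y ^ (2 * (m : ℤ) * n.1 + n.2) * qp τ ((m : ℝ) * (n.1 : ℝ) ^ 2 + (n.1 : ℝ) * (n.2 : ℝ)))) :=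
    key2.of_norm
  have hprod : (∑' n : ℤ × ℤ, ((Real.sign ((n.1 : ℝ) + α) + Real.sign ((n.2 : ℝ)) : ℝ) : ℂ) *
        (y ^ (2 * (m : ℤ) * n.1 + n.2) * qp τ ((m : ℝ) * (n.1 : ℝ) ^ 2 + (n.1 : ℝ) * (n.2 : ℝ))))
      = ∑' k : ℤ, (2 * (y ^ (2 * (m : ℤ) * k) * qp τ ((m : ℝ) * (k : ℝ) ^ 2) / (1 - y * qp τ (k : ℝ)))
          - y ^ (2 * (m : ℤ) * k) * qp τ ((m : ℝ) * (k : ℝ) ^ 2)) := by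
    rw [Summable.tsum_prod' hFsum (fun b => ((hinnerS b).of_norm))]
    exact tsum_congr fun k => (hinner k).tsum_eq
  rw [hprod]
  have hsplit : ∀ k : ℤ,
      (2 * (y ^ (2 * (m : ℤ) * k) * qp τ ((m : ℝ) * (k : ℝ) ^ 2) / (1 - y * qp τ (k : ℝ)))
        - y ^ (2 * (m : ℤ) * k) * qp τ ((m : ℝ) * (k : ℝ) ^ 2))
      = 2 * (y ^ (2 * (m : ℤ) * k) * qp τ ((m : ℝ) * (k : ℝ) ^ 2) * (y * qp τ (k : ℝ)) / (1 - y * qp τ (k : ℝ)))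
        + y ^ (2 * (m : ℤ) * k) * qp τ ((m : ℝ) * (k : ℝ) ^ 2) := by
    intro k
    have h := h1w k
    field_simp
    ring
  rw [tsum_congr hsplit, Summable.tsum_add (key1'.of_norm.mul_left 2) key3.of_norm, tsum_mul_left]
  ring
end

section
/- Let m be a positive integer, τ ∈ ℍ, and z ∈ ℂ with 0 < Im z < Im τ; set y := e^{2πiz}. Then Σ_{k∈ℤ} y^{2km+1} q^{mk² + k} / (1 − y q^k) = Σ_{k≥0, l≥1} y^{2km+l} q^{mk² + kl} − Σ_{k<0, l≤0} y^{2km+l} q^{mk² + kl}, where all three series converge absolutely (k, l range over ℤ subject to the stated inequalities). -/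
open Complex Real

lemma qp_int (τ : ℂ) (j : ℤ) :
    qp τ (j : ℝ) = Complex.exp (2 * Real.pi * Complex.I * τ) ^ j := by
  rw [qp, ← Complex.exp_int_mul]
  congr 1
  push_cast
  ring

lemma norm_exp_two_pi (w : ℂ) :
    ‖Complex.exp (2 * Real.pi * Complex.I * w)‖ = Real.exp (-(2 * Real.pi * w.im)) := by
  rw [Complex.norm_exp]
  congr 1
  simp [Complex.mul_re, Complex.mul_im]

lemma geom_int_ge {u : ℝ} (h0 : 0 < u) (h1 : u < 1) (c : ℤ) :
    Summable (fun l : ℤ => if c ≤ l then u ^ l else 0) := by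
  have hinj : Function.Injective (fun n : ℕ => c + (n : ℤ)) := fun a b h => by
    simpa using h
  rw [← hinj.summable_iff (f := fun l : ℤ => if c ≤ l then u ^ l else 0)]
  · have heq : ((fun l : ℤ => if c ≤ l then u ^ l else 0) ∘ (fun n : ℕ => c + (n : ℤ)))
        = fun n : ℕ => u ^ c * u ^ (n : ℕ) := by
      funext n
      show (if c ≤ c + (n : ℤ) then u ^ (c + (n : ℤ)) else 0) = _
      rw [if_pos (by omega), zpow_add₀ (ne_of_gt h0), zpow_natCast]
    rw [heq]
    exact (summable_geometric_of_lt_one h0.le h1).mul_left (u ^ c)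
  · intro l hl
    rw [if_neg]
    intro hcl
    exact hl ⟨(l - c).toNat, show c + ((l - c).toNat : ℤ) = l by omega⟩

lemma geom_int_le {u : ℝ} (h0 : 0 < u) (h1 : u < 1) (c : ℤ) :
    Summable (fun l : ℤ => if l ≤ c then u ^ (-l) else 0) := by
  have hinj : Function.Injective (fun n : ℕ => c - (n : ℤ)) := fun a b h => by
    simpa using h
  rw [← hinj.summable_iff (f := fun l : ℤ => if l ≤ c then u ^ (-l) else 0)]
  · have heq : ((fun l : ℤ => if l ≤ c then u ^ (-l) else 0) ∘ (fun n : ℕ => c - (n : ℤ)))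
        = fun n : ℕ => u ^ (-c) * u ^ (n : ℕ) := by
      funext n
      show (if c - (n : ℤ) ≤ c then u ^ (-(c - (n : ℤ))) else 0) = _
      rw [if_pos (by omega), show -(c - (n:ℤ)) = -c + n by ring,
        zpow_add₀ (ne_of_gt h0), zpow_natCast]
    rw [heq]
    exact (summable_geometric_of_lt_one h0.le h1).mul_left (u ^ (-c))
  · intro l hl
    rw [if_neg]
    intro hcl
    exact hl ⟨(c - l).toNat, show c - ((c - l).toNat : ℤ) = l by omega⟩

lemma cone2_k_summable {A R : ℝ} (hA0 : 0 < A) (hA1 : A < 1) (hR0 : 0 < R) (hRA : R < A)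
    (m : ℕ) (hm : 0 < m) :
    Summable (fun k : ℤ => if k < 0 then A ^ (2 * k * (m : ℤ)) * R ^ ((m : ℤ) * k ^ 2) else 0) := by
  have hR1 : R < 1 := hRA.trans hA1
  set g : ℕ → ℝ := fun n => (A⁻¹) ^ (2 * m * (n + 1)) * R ^ (m * (n + 1) ^ 2) with hg
  have hgb : ∀ n : ℕ, g (n + 2) ≤ R ^ n := by
    intro n
    set j := n + 3 with hj
    have : g (n + 2) = (A⁻¹) ^ (2 * m * j) * R ^ (m * j ^ 2) := by rw [hg]
    rw [this]
    calc (A⁻¹) ^ (2 * m * j) * R ^ (m * j ^ 2)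
        ≤ (A⁻¹) ^ (2 * m * j) * (A ^ (2 * m * j) * R ^ (m * j)) := by
          apply mul_le_mul_of_nonneg_left _ (by positivity)
          calc R ^ (m * j ^ 2) ≤ R ^ (3 * m * j) :=
                pow_le_pow_of_le_one hR0.le hR1.le (by
                  have h3 : 3 ≤ j := by omega
                  calc 3 * m * j = m * (3 * j) := by ring
                    _ ≤ m * (j * j) := Nat.mul_le_mul_left m (Nat.mul_le_mul_right j h3)
                    _ = m * j ^ 2 := by ring)
            _ = R ^ (2 * m * j) * R ^ (m * j) := by rw [← pow_add]; congr 1; ring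
            _ ≤ A ^ (2 * m * j) * R ^ (m * j) := by
                exact mul_le_mul_of_nonneg_right (pow_le_pow_left₀ hR0.le hRA.le _) (by positivity)
      _ = R ^ (m * j) := by
          rw [← mul_assoc, ← mul_pow, inv_mul_cancel₀ (ne_of_gt hA0), one_pow, one_mul]
      _ ≤ R ^ n := pow_le_pow_of_le_one hR0.le hR1.le (by nlinarith)
  have hgs : Summable g := by
    rw [← summable_nat_add_iff 2]
    exact Summable.of_nonneg_of_le (fun n => by positivity) hgb
      (summable_geometric_of_lt_one hR0.le hR1)
  have hinj : Function.Injective (fun n : ℕ => -((n : ℤ) + 1)) := fun a b h => by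
    simpa using h
  rw [← hinj.summable_iff
    (f := fun k : ℤ => if k < 0 then A ^ (2 * k * (m : ℤ)) * R ^ ((m : ℤ) * k ^ 2) else 0)]
  · have heq : ((fun k : ℤ => if k < 0 then A ^ (2 * k * (m : ℤ)) * R ^ ((m : ℤ) * k ^ 2) else 0)
        ∘ (fun n : ℕ => -((n : ℤ) + 1))) = g := by
      funext n
      show (if -((n : ℤ) + 1) < 0 then
          A ^ (2 * -((n : ℤ) + 1) * (m : ℤ)) * R ^ ((m : ℤ) * (-((n : ℤ) + 1)) ^ 2) else 0) = g n
      rw [if_pos (by omega)]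
      rw [show (2 * -((n : ℤ) + 1) * (m : ℤ)) = -((2 * m * (n + 1) : ℕ) : ℤ) by push_cast; ring,
        show ((m : ℤ) * (-((n : ℤ) + 1)) ^ 2) = ((m * (n + 1) ^ 2 : ℕ) : ℤ) by push_cast; ring,
        zpow_neg, zpow_natCast, zpow_natCast]
      simp [hg, inv_pow]
    rw [heq]; exact hgs
  · intro k hk
    rw [if_neg]
    intro hk0
    exact hk ⟨(-k - 1).toNat, show -(((-k - 1).toNat : ℤ) + 1) = k by omega⟩

lemma hasSum_cone1_row (y Q : ℂ) (hy0 : y ≠ 0) (hQ0 : Q ≠ 0) (m : ℕ) (k : ℤ)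
    (hw : ‖y * Q ^ k‖ < 1) :
    HasSum (fun l : ℤ => if 1 ≤ l then y ^ (2 * k * (m:ℤ) + l) * Q ^ ((m:ℤ) * k ^ 2 + k * l) else 0)
      (y ^ (2 * k * (m:ℤ) + 1) * Q ^ ((m:ℤ) * k ^ 2 + k) / (1 - y * Q ^ k)) := by
  have hinj : Function.Injective (fun n : ℕ => (n : ℤ) + 1) := fun a b hab => by simpa using hab
  have hvan : ∀ l ∉ Set.range (fun n : ℕ => (n : ℤ) + 1),
      (if 1 ≤ l then y ^ (2 * k * (m:ℤ) + l) * Q ^ ((m:ℤ) * k ^ 2 + k * l) else 0) = 0 := by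
    intro l hl
    rw [if_neg]
    intro h1
    exact hl ⟨(l - 1).toNat, show ((l - 1).toNat : ℤ) + 1 = l by omega⟩
  rw [← Function.Injective.hasSum_iff hinj hvan]
  have geo := hasSum_geometric_of_norm_lt_one hw
  have h := geo.mul_left (y ^ (2 * k * (m:ℤ) + 1) * Q ^ ((m:ℤ) * k ^ 2 + k))
  have heq : ((fun l : ℤ => if 1 ≤ l then y ^ (2 * k * (m:ℤ) + l) * Q ^ ((m:ℤ) * k ^ 2 + k * l) else 0)
      ∘ (fun n : ℕ => (n : ℤ) + 1))
      = fun n : ℕ => y ^ (2 * k * (m:ℤ) + 1) * Q ^ ((m:ℤ) * k ^ 2 + k) * (y * Q ^ k) ^ n := by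
    funext n
    show (if (1:ℤ) ≤ (n:ℤ) + 1 then
        y ^ (2 * k * (m:ℤ) + ((n:ℤ) + 1)) * Q ^ ((m:ℤ) * k ^ 2 + k * ((n:ℤ) + 1)) else 0) = _
    rw [if_pos (by omega), mul_pow, ← zpow_natCast y n, ← zpow_natCast (Q ^ k) n, ← zpow_mul,
      show 2 * k * (m:ℤ) + ((n:ℤ) + 1) = (2 * k * (m:ℤ) + 1) + (n:ℤ) by ring,
      show (m:ℤ) * k ^ 2 + k * ((n:ℤ) + 1) = ((m:ℤ) * k ^ 2 + k) + k * (n:ℤ) by ring,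
      zpow_add₀ hy0, zpow_add₀ hQ0]
    ring
  rw [heq, div_eq_mul_inv]
  exact h

lemma hasSum_cone2_row (y Q : ℂ) (hy0 : y ≠ 0) (hQ0 : Q ≠ 0) (m : ℕ) (k : ℤ)
    (hw : ‖(y * Q ^ k)⁻¹‖ < 1) :
    HasSum (fun l : ℤ => if l ≤ 0 then y ^ (2 * k * (m:ℤ) + l) * Q ^ ((m:ℤ) * k ^ 2 + k * l) else 0)
      (-(y ^ (2 * k * (m:ℤ) + 1) * Q ^ ((m:ℤ) * k ^ 2 + k) / (1 - y * Q ^ k))) := by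
  set w : ℂ := y * Q ^ k with hwdef
  have hw0 : w ≠ 0 := mul_ne_zero hy0 (zpow_ne_zero _ hQ0)
  have hwne1 : w ≠ 1 := by
    intro h
    rw [h] at hw
    simp at hw
  have h1w : (1 : ℂ) - w ≠ 0 := sub_ne_zero_of_ne (fun h => hwne1 h.symm)
  have h1w' : (1 : ℂ) - w⁻¹ ≠ 0 := by
    refine sub_ne_zero_of_ne fun h => ?_
    rw [← h] at hw
    simp at hw
  have hinj : Function.Injective (fun n : ℕ => -(n : ℤ)) := fun a b hab => by simpa using hab
  have hvan : ∀ l ∉ Set.range (fun n : ℕ => -(n : ℤ)),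
      (if l ≤ 0 then y ^ (2 * k * (m:ℤ) + l) * Q ^ ((m:ℤ) * k ^ 2 + k * l) else 0) = 0 := by
    intro l hl
    rw [if_neg]
    intro h1
    exact hl ⟨(-l).toNat, show -((-l).toNat : ℤ) = l by omega⟩
  rw [← Function.Injective.hasSum_iff hinj hvan]
  have geo := hasSum_geometric_of_norm_lt_one hw
  set c : ℂ := y ^ (2 * k * (m:ℤ) + 1) * Q ^ ((m:ℤ) * k ^ 2 + k) with hcdef
  have h := geo.mul_left (c * w⁻¹)
  have hval : c * w⁻¹ * (1 - w⁻¹)⁻¹ = -(c / (1 - w)) := by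
    have h2 : (1 - w⁻¹)⁻¹ = w * (w - 1)⁻¹ := by
      rw [show (1 - w⁻¹) = (w - 1) * w⁻¹ by field_simp, mul_inv, inv_inv]
      ring
    rw [h2, div_eq_mul_inv, show w - 1 = -(1 - w) by ring, inv_neg]
    calc c * w⁻¹ * (w * -(1 - w)⁻¹) = c * (w⁻¹ * w) * -(1 - w)⁻¹ := by ring
      _ = -(c * (1 - w)⁻¹) := by rw [inv_mul_cancel₀ hw0]; ring
  rw [hval] at h
  have heq : ((fun l : ℤ => if l ≤ 0 then y ^ (2 * k * (m:ℤ) + l) * Q ^ ((m:ℤ) * k ^ 2 + k * l) else 0)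
      ∘ (fun n : ℕ => -(n : ℤ))) = fun n : ℕ => c * w⁻¹ * (w⁻¹) ^ n := by
    funext n
    show (if -(n:ℤ) ≤ 0 then
        y ^ (2 * k * (m:ℤ) + -(n:ℤ)) * Q ^ ((m:ℤ) * k ^ 2 + k * -(n:ℤ)) else 0) = _
    rw [if_pos (by omega)]
    have step : c * w⁻¹ * (w⁻¹) ^ n = c * w ^ (-((n:ℤ) + 1)) := by
      rw [inv_pow, ← zpow_natCast w n, ← zpow_neg, show w⁻¹ = w ^ (-1 : ℤ) by rw [zpow_neg_one],
        mul_assoc, ← zpow_add₀ hw0]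
      congr 1
      ring
    rw [step, hwdef, mul_zpow, ← zpow_mul, hcdef,
      show 2 * k * (m:ℤ) + -(n:ℤ) = (2 * k * (m:ℤ) + 1) + -((n:ℤ) + 1) by ring,
      show (m:ℤ) * k ^ 2 + k * -(n:ℤ) = ((m:ℤ) * k ^ 2 + k) + k * -((n:ℤ) + 1) by ring,
      zpow_add₀ hy0, zpow_add₀ hQ0]
    ring
  rw [heq]
  exact h

/-- Geometric expansion of `f₂`: for `0 < Im z < Im τ`,
`Σ_{k∈ℤ} y^{2km+1} q^{mk²+k}/(1 - y q^k) = Σ_{k≥0,l≥1} y^{2km+l} q^{mk²+kl}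
  - Σ_{k<0,l≤0} y^{2km+l} q^{mk²+kl}`. -/
theorem f2_cone_expansion (m : ℕ) (hm : 0 < m) (τ z : ℂ) (hτ : 0 < τ.im)
    (hz0 : 0 < z.im) (hz1 : z.im < τ.im)
    (y : ℂ) (hy : y = Complex.exp (2 * Real.pi * Complex.I * z)) :
    Summable (fun k : ℤ =>
      ‖y ^ (2 * k * (m : ℤ) + 1) * qp τ ((m : ℝ) * (k : ℝ) ^ 2 + (k : ℝ)) / (1 - y * qp τ (k : ℝ))‖) ∧
    Summable (fun n : ℤ × ℤ => if 0 ≤ n.1 ∧ 1 ≤ n.2 then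
      ‖y ^ (2 * n.1 * (m : ℤ) + n.2) * qp τ ((m : ℝ) * (n.1 : ℝ) ^ 2 + (n.1 : ℝ) * (n.2 : ℝ))‖
      else 0) ∧
    Summable (fun n : ℤ × ℤ => if n.1 < 0 ∧ n.2 ≤ 0 then
      ‖y ^ (2 * n.1 * (m : ℤ) + n.2) * qp τ ((m : ℝ) * (n.1 : ℝ) ^ 2 + (n.1 : ℝ) * (n.2 : ℝ))‖
      else 0) ∧
    (∑' k : ℤ, y ^ (2 * k * (m : ℤ) + 1) * qp τ ((m : ℝ) * (k : ℝ) ^ 2 + (k : ℝ)) / (1 - y * qp τ (k : ℝ))) =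
      (∑' n : ℤ × ℤ, if 0 ≤ n.1 ∧ 1 ≤ n.2 then
        y ^ (2 * n.1 * (m : ℤ) + n.2) * qp τ ((m : ℝ) * (n.1 : ℝ) ^ 2 + (n.1 : ℝ) * (n.2 : ℝ))
        else 0) -
      (∑' n : ℤ × ℤ, if n.1 < 0 ∧ n.2 ≤ 0 then
        y ^ (2 * n.1 * (m : ℤ) + n.2) * qp τ ((m : ℝ) * (n.1 : ℝ) ^ 2 + (n.1 : ℝ) * (n.2 : ℝ))
        else 0) := by
  have hy0 : y ≠ 0 := by rw [hy]; exact Complex.exp_ne_zero _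
  obtain ⟨Q, hQdef⟩ : ∃ Q, Q = Complex.exp (2 * Real.pi * Complex.I * τ) := ⟨_, rfl⟩
  have hQ0 : Q ≠ 0 := by rw [hQdef]; exact Complex.exp_ne_zero _
  have hqpk : ∀ j : ℤ, qp τ (j : ℝ) = Q ^ j := fun j => by rw [qp_int, hQdef]
  have hqp2 : ∀ a b : ℤ, qp τ ((m:ℝ) * (a:ℝ) ^ 2 + (a:ℝ) * (b:ℝ)) = Q ^ ((m:ℤ) * a ^ 2 + a * b) := by
    intro a b
    rw [show ((m:ℝ) * (a:ℝ) ^ 2 + (a:ℝ) * (b:ℝ)) = ((((m:ℤ) * a ^ 2 + a * b : ℤ)) : ℝ) by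
      push_cast; ring, hqpk]
  have hqp1 : ∀ a : ℤ, qp τ ((m:ℝ) * (a:ℝ) ^ 2 + (a:ℝ)) = Q ^ ((m:ℤ) * a ^ 2 + a) := by
    intro a
    rw [show ((m:ℝ) * (a:ℝ) ^ 2 + (a:ℝ)) = ((((m:ℤ) * a ^ 2 + a : ℤ)) : ℝ) by
      push_cast; ring, hqpk]
  simp only [hqp2, hqp1, hqpk]
  set A : ℝ := ‖y‖ with hAdef
  set R : ℝ := ‖Q‖ with hRdef
  have hA0 : (0:ℝ) < A := norm_pos_iff.mpr hy0
  have hR0 : (0:ℝ) < R := norm_pos_iff.mpr hQ0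
  have hAe : A = Real.exp (-(2 * Real.pi * z.im)) := by rw [hAdef, hy, norm_exp_two_pi]
  have hRe : R = Real.exp (-(2 * Real.pi * τ.im)) := by rw [hRdef, hQdef, norm_exp_two_pi]
  have hA1 : A < 1 := by rw [hAe, Real.exp_lt_one_iff]; nlinarith [Real.pi_pos]
  have hRA : R < A := by
    rw [hAe, hRe]
    exact Real.exp_lt_exp.mpr (by nlinarith [Real.pi_pos])
  have hR1 : R < 1 := hRA.trans hA1
  have hnorm : ∀ a b : ℤ, ‖y ^ a * Q ^ b‖ = A ^ a * R ^ b := fun a b => by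
    rw [norm_mul, norm_zpow, norm_zpow]
  -- Summability of cone 1 norms
  have hS2 : Summable (fun n : ℤ × ℤ => if 0 ≤ n.1 ∧ 1 ≤ n.2 then
      ‖y ^ (2 * n.1 * (m:ℤ) + n.2) * Q ^ ((m:ℤ) * n.1 ^ 2 + n.1 * n.2)‖ else 0) := by
    have hu1 : (0:ℝ) < A ^ (2 * m) := by positivity
    have hu2 : A ^ (2 * m) < 1 := pow_lt_one₀ hA0.le hA1 (by omega)
    have hmaj := (geom_int_ge hu1 hu2 0).mul_of_nonneg (geom_int_ge hA0 hA1 1)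
      (fun k => by dsimp only; split
                   · positivity
                   · exact le_rfl)
      (fun l => by dsimp only; split
                   · positivity
                   · exact le_rfl)
    apply Summable.of_nonneg_of_le _ _ hmaj
    · intro n
      split
      · exact norm_nonneg _
      · exact le_rfl
    · intro n
      by_cases h : 0 ≤ n.1 ∧ 1 ≤ n.2
      · rw [if_pos h, if_pos h.1, if_pos h.2, hnorm]
        have he : R ^ ((m:ℤ) * n.1 ^ 2 + n.1 * n.2) ≤ 1 := by
          have h0e : (0:ℤ) ≤ (m:ℤ) * n.1 ^ 2 + n.1 * n.2 :=
            add_nonneg (by positivity) (mul_nonneg h.1 (by omega))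
          have := zpow_le_zpow_right_of_le_one₀ hR0 hR1.le h0e
          simpa using this
        have hsplit : A ^ (2 * n.1 * (m:ℤ) + n.2) = (A ^ (2 * m)) ^ n.1 * A ^ n.2 := by
          rw [← zpow_natCast A (2 * m), ← zpow_mul, ← zpow_add₀ (ne_of_gt hA0)]
          congr 1
          push_cast
          ring
        calc A ^ (2 * n.1 * (m:ℤ) + n.2) * R ^ ((m:ℤ) * n.1 ^ 2 + n.1 * n.2)
            ≤ A ^ (2 * n.1 * (m:ℤ) + n.2) * 1 :=
              mul_le_mul_of_nonneg_left he (by positivity)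
          _ = (A ^ (2 * m)) ^ n.1 * A ^ n.2 := by rw [mul_one, hsplit]
      · rw [if_neg h]
        apply mul_nonneg
        · split
          · positivity
          · exact le_rfl
        · split
          · positivity
          · exact le_rfl
  -- Summability of cone 2 norms
  have hS3 : Summable (fun n : ℤ × ℤ => if n.1 < 0 ∧ n.2 ≤ 0 then
      ‖y ^ (2 * n.1 * (m:ℤ) + n.2) * Q ^ ((m:ℤ) * n.1 ^ 2 + n.1 * n.2)‖ else 0) := by
    have hu1 : (0:ℝ) < R / A := by positivity
    have hu2 : R / A < 1 := (div_lt_one hA0).mpr hRA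
    have hmaj := (cone2_k_summable hA0 hA1 hR0 hRA m hm).mul_of_nonneg (geom_int_le hu1 hu2 0)
      (fun k => by dsimp only; split
                   · positivity
                   · exact le_rfl)
      (fun l => by dsimp only; split
                   · positivity
                   · exact le_rfl)
    apply Summable.of_nonneg_of_le _ _ hmaj
    · intro n
      split
      · exact norm_nonneg _
      · exact le_rfl
    · intro n
      by_cases h : n.1 < 0 ∧ n.2 ≤ 0
      · rw [if_pos h, if_pos h.1, if_pos h.2, hnorm]
        have heq1 : A ^ (2 * n.1 * (m:ℤ) + n.2) * R ^ ((m:ℤ) * n.1 ^ 2 + n.1 * n.2)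
            = (A ^ (2 * n.1 * (m:ℤ)) * R ^ ((m:ℤ) * n.1 ^ 2)) * ((A⁻¹ * R ^ (-n.1)) ^ (-n.2)) := by
          rw [show (A⁻¹ * R ^ (-n.1)) ^ (-n.2) = A ^ n.2 * R ^ (n.1 * n.2) by
            rw [mul_zpow, inv_zpow, ← zpow_neg, neg_neg, ← zpow_mul, neg_mul_neg],
            zpow_add₀ (ne_of_gt hA0), zpow_add₀ (ne_of_gt hR0)]
          ring
        rw [heq1]
        apply mul_le_mul_of_nonneg_left _ (by positivity)
        have hvle : A⁻¹ * R ^ (-n.1) ≤ R / A := by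
          rw [div_eq_mul_inv, mul_comm R A⁻¹]
          apply mul_le_mul_of_nonneg_left _ (by positivity)
          have := zpow_le_zpow_right_of_le_one₀ hR0 hR1.le (show (1:ℤ) ≤ -n.1 by omega)
          simpa using this
        rw [show -n.2 = (((-n.2).toNat : ℕ) : ℤ) by omega, zpow_natCast, zpow_natCast]
        exact pow_le_pow_left₀ (by positivity) hvle _
      · rw [if_neg h]
        apply mul_nonneg
        · split
          · positivity
          · exact le_rfl
        · split
          · positivity
          · exact le_rfl
  -- row sums
  have hwpos : ∀ k : ℤ, 0 ≤ k → ‖y * Q ^ k‖ < 1 := by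
    intro k hk
    rw [norm_mul, norm_zpow]
    calc A * R ^ k ≤ A * 1 := by
          apply mul_le_mul_of_nonneg_left _ hA0.le
          have := zpow_le_zpow_right_of_le_one₀ hR0 hR1.le hk
          simpa using this
      _ < 1 := by rw [mul_one]; exact hA1
  have hwneg : ∀ k : ℤ, k < 0 → ‖(y * Q ^ k)⁻¹‖ < 1 := by
    intro k hk
    rw [norm_inv, norm_mul, norm_zpow, mul_inv, ← zpow_neg]
    calc A⁻¹ * R ^ (-k) ≤ A⁻¹ * R := by
          apply mul_le_mul_of_nonneg_left _ (by positivity)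
          have := zpow_le_zpow_right_of_le_one₀ hR0 hR1.le (show (1:ℤ) ≤ -k by omega)
          simpa using this
      _ < 1 := by
          rw [mul_comm, ← div_eq_mul_inv]
          exact (div_lt_one hA0).mpr hRA
  have hFrow : ∀ k : ℤ, HasSum (fun l : ℤ => if 0 ≤ k ∧ 1 ≤ l then
      y ^ (2 * k * (m:ℤ) + l) * Q ^ ((m:ℤ) * k ^ 2 + k * l) else 0)
      (if 0 ≤ k then
        y ^ (2 * k * (m:ℤ) + 1) * Q ^ ((m:ℤ) * k ^ 2 + k) / (1 - y * Q ^ k) else 0) := by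
    intro k
    by_cases hk : 0 ≤ k
    · rw [if_pos hk]
      have := hasSum_cone1_row y Q hy0 hQ0 m k (hwpos k hk)
      refine this.congr_fun fun l => ?_
      by_cases hl : 1 ≤ l
      · rw [if_pos ⟨hk, hl⟩, if_pos hl]
      · rw [if_neg (fun hc => hl hc.2), if_neg hl]
    · rw [if_neg hk]
      refine hasSum_zero.congr_fun fun l => ?_
      rw [if_neg (fun hc => hk hc.1)]
  have hGrow : ∀ k : ℤ, HasSum (fun l : ℤ => if k < 0 ∧ l ≤ 0 then
      y ^ (2 * k * (m:ℤ) + l) * Q ^ ((m:ℤ) * k ^ 2 + k * l) else 0)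
      (if k < 0 then
        -(y ^ (2 * k * (m:ℤ) + 1) * Q ^ ((m:ℤ) * k ^ 2 + k) / (1 - y * Q ^ k)) else 0) := by
    intro k
    by_cases hk : k < 0
    · rw [if_pos hk]
      have := hasSum_cone2_row y Q hy0 hQ0 m k (hwneg k hk)
      refine this.congr_fun fun l => ?_
      by_cases hl : l ≤ 0
      · rw [if_pos ⟨hk, hl⟩, if_pos hl]
      · rw [if_neg (fun hc => hl hc.2), if_neg hl]
    · rw [if_neg hk]
      refine hasSum_zero.congr_fun fun l => ?_
      rw [if_neg (fun hc => hk hc.1)]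
  -- norms of cone functions as norms
  have hS2' : Summable (fun n : ℤ × ℤ => ‖if 0 ≤ n.1 ∧ 1 ≤ n.2 then
      y ^ (2 * n.1 * (m:ℤ) + n.2) * Q ^ ((m:ℤ) * n.1 ^ 2 + n.1 * n.2) else 0‖) := by
    refine hS2.congr fun n => ?_
    rw [apply_ite norm, norm_zero]
  have hS3' : Summable (fun n : ℤ × ℤ => ‖if n.1 < 0 ∧ n.2 ≤ 0 then
      y ^ (2 * n.1 * (m:ℤ) + n.2) * Q ^ ((m:ℤ) * n.1 ^ 2 + n.1 * n.2) else 0‖) := by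
    refine hS3.congr fun n => ?_
    rw [apply_ite norm, norm_zero]
  have hFsum : Summable (fun n : ℤ × ℤ => if 0 ≤ n.1 ∧ 1 ≤ n.2 then
      y ^ (2 * n.1 * (m:ℤ) + n.2) * Q ^ ((m:ℤ) * n.1 ^ 2 + n.1 * n.2) else 0) :=
    Summable.of_norm hS2'
  have hGsum : Summable (fun n : ℤ × ℤ => if n.1 < 0 ∧ n.2 ≤ 0 then
      y ^ (2 * n.1 * (m:ℤ) + n.2) * Q ^ ((m:ℤ) * n.1 ^ 2 + n.1 * n.2) else 0) :=
    Summable.of_norm hS3'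
  -- fiberwise norm summability
  have hfibF := (summable_prod_of_nonneg (fun n => norm_nonneg _)).mp hS2'
  have hfibG := (summable_prod_of_nonneg (fun n => norm_nonneg _)).mp hS3'
  -- summability of row sums
  have hrowF : Summable (fun k : ℤ => if 0 ≤ k then
      y ^ (2 * k * (m:ℤ) + 1) * Q ^ ((m:ℤ) * k ^ 2 + k) / (1 - y * Q ^ k) else 0) := by
    apply Summable.of_norm_bounded hfibF.2
    intro k
    rw [← (hFrow k).tsum_eq]
    exact norm_tsum_le_tsum_norm (hfibF.1 k)
  have hrowG : Summable (fun k : ℤ => if k < 0 then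
      -(y ^ (2 * k * (m:ℤ) + 1) * Q ^ ((m:ℤ) * k ^ 2 + k) / (1 - y * Q ^ k)) else 0) := by
    apply Summable.of_norm_bounded hfibG.2
    intro k
    rw [← (hGrow k).tsum_eq]
    exact norm_tsum_le_tsum_norm (hfibG.1 k)
  -- per-k identity
  have hT : ∀ k : ℤ, y ^ (2 * k * (m:ℤ) + 1) * Q ^ ((m:ℤ) * k ^ 2 + k) / (1 - y * Q ^ k)
      = (if 0 ≤ k then
          y ^ (2 * k * (m:ℤ) + 1) * Q ^ ((m:ℤ) * k ^ 2 + k) / (1 - y * Q ^ k) else 0)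
        - (if k < 0 then
          -(y ^ (2 * k * (m:ℤ) + 1) * Q ^ ((m:ℤ) * k ^ 2 + k) / (1 - y * Q ^ k)) else 0) := by
    intro k
    by_cases hk : 0 ≤ k
    · rw [if_pos hk, if_neg (by omega), sub_zero]
    · rw [if_neg hk, if_pos (by omega), zero_sub, neg_neg]
  refine ⟨?_, hS2, hS3, ?_⟩
  · -- statement 1
    apply Summable.of_nonneg_of_le (fun k => norm_nonneg _) _ (hfibF.2.add hfibG.2)
    intro k
    rw [hT k]
    calc ‖(if 0 ≤ k then
          y ^ (2 * k * (m:ℤ) + 1) * Q ^ ((m:ℤ) * k ^ 2 + k) / (1 - y * Q ^ k) else 0)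
        - (if k < 0 then
          -(y ^ (2 * k * (m:ℤ) + 1) * Q ^ ((m:ℤ) * k ^ 2 + k) / (1 - y * Q ^ k)) else 0)‖
        ≤ ‖(if 0 ≤ k then
          y ^ (2 * k * (m:ℤ) + 1) * Q ^ ((m:ℤ) * k ^ 2 + k) / (1 - y * Q ^ k) else 0)‖
        + ‖(if k < 0 then
          -(y ^ (2 * k * (m:ℤ) + 1) * Q ^ ((m:ℤ) * k ^ 2 + k) / (1 - y * Q ^ k)) else 0)‖ :=
          norm_sub_le _ _
      _ ≤ _ := by
          apply add_le_add
          · rw [← (hFrow k).tsum_eq]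
            exact norm_tsum_le_tsum_norm (hfibF.1 k)
          · rw [← (hGrow k).tsum_eq]
            exact norm_tsum_le_tsum_norm (hfibG.1 k)
  · -- the identity
    rw [Summable.tsum_prod' hFsum (fun k => ((hFrow k).summable)),
      Summable.tsum_prod' hGsum (fun k => ((hGrow k).summable))]
    have h1 : ∀ k : ℤ, ∑' l : ℤ, (if 0 ≤ k ∧ 1 ≤ l then
        y ^ (2 * k * (m:ℤ) + l) * Q ^ ((m:ℤ) * k ^ 2 + k * l) else 0)
        = (if 0 ≤ k then
          y ^ (2 * k * (m:ℤ) + 1) * Q ^ ((m:ℤ) * k ^ 2 + k) / (1 - y * Q ^ k) else 0) :=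
      fun k => (hFrow k).tsum_eq
    have h2 : ∀ k : ℤ, ∑' l : ℤ, (if k < 0 ∧ l ≤ 0 then
        y ^ (2 * k * (m:ℤ) + l) * Q ^ ((m:ℤ) * k ^ 2 + k * l) else 0)
        = (if k < 0 then
          -(y ^ (2 * k * (m:ℤ) + 1) * Q ^ ((m:ℤ) * k ^ 2 + k) / (1 - y * Q ^ k)) else 0) :=
      fun k => (hGrow k).tsum_eq
    calc ∑' k : ℤ, y ^ (2 * k * (m:ℤ) + 1) * Q ^ ((m:ℤ) * k ^ 2 + k) / (1 - y * Q ^ k)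
        = ∑' k : ℤ, ((if 0 ≤ k then
            y ^ (2 * k * (m:ℤ) + 1) * Q ^ ((m:ℤ) * k ^ 2 + k) / (1 - y * Q ^ k) else 0)
          - (if k < 0 then
            -(y ^ (2 * k * (m:ℤ) + 1) * Q ^ ((m:ℤ) * k ^ 2 + k) / (1 - y * Q ^ k)) else 0)) :=
          tsum_congr hT
      _ = (∑' k : ℤ, (if 0 ≤ k then
            y ^ (2 * k * (m:ℤ) + 1) * Q ^ ((m:ℤ) * k ^ 2 + k) / (1 - y * Q ^ k) else 0))
          - (∑' k : ℤ, (if k < 0 then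
            -(y ^ (2 * k * (m:ℤ) + 1) * Q ^ ((m:ℤ) * k ^ 2 + k) / (1 - y * Q ^ k)) else 0)) :=
          Summable.tsum_sub hrowF hrowG
      _ = _ := by
          congr 1
          · exact tsum_congr fun k => (h1 k).symm
          · exact tsum_congr fun k => (h2 k).symm
end
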